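/- Let X be a mean-zero strictly subgaussian random variable with variance σ_X² (E[exp(sX)] ≤ exp(s²σ_X²/2) for all s). Then for every t with 0 < t < 1/(2σ_X²), E[exp(t(X² − σ_X²))] ≤ exp(σ_X⁴t²/(1 − 2σ_X²t)). -/

import Mathlib

open MeasureTheory ProbabilityTheory Real

lemma aux_log_ineq {u : ℝ} (h0 : 0 < u) (h1 : u < 1) :
    1 / Real.sqrt (1 - u) ≤ Real.exp (u / 2 + u ^ 2 / (4 * (1 - u))) := by
  have hv : 0 < 1 - u := by linarith
  set y : ℝ := u + u ^ 2 / (2 * (1 - u)) with hy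
  have hy0 : 0 ≤ y := by positivity
  have hw : (u ^ 2 / (2 * (1 - u))) * (2 * (1 - u)) = u ^ 2 := by field_simp
  have h2 : 1 / (1 - u) ≤ Real.exp y := by
    refine le_trans ?_ (Real.quadratic_le_exp_of_nonneg hy0)
    rw [div_le_iff₀ hv, hy]
    set w : ℝ := u ^ 2 / (2 * (1 - u))
    have hw0 : 0 ≤ w := by positivity
    nlinarith [sq_nonneg (u - w), sq_nonneg u, sq_nonneg w]
  have h4 : Real.sqrt (1 / (1 - u)) ≤ Real.sqrt (Real.exp y) := Real.sqrt_le_sqrt h2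
  have h5 : Real.sqrt (Real.exp y) = Real.exp (y / 2) := by
    rw [show Real.exp y = Real.exp (y / 2) * Real.exp (y / 2) by
      rw [← Real.exp_add]; ring_nf, Real.sqrt_mul_self (Real.exp_nonneg _)]
  have h6 : Real.sqrt (1 / (1 - u)) = 1 / Real.sqrt (1 - u) := by
    rw [one_div, Real.sqrt_inv, one_div]
  rw [h6, h5] at h4
  refine h4.trans (le_of_eq ?_)
  congr 1
  rw [hy]; field_simp; ring

lemma hs_integrable {t : ℝ} (ht : 0 < t) (x : ℝ) :
    Integrable (fun s : ℝ => Real.exp (s * x - s ^ 2 / (4 * t))) := by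
  have h1 : ∀ s : ℝ, s * x - s ^ 2 / (4 * t) =
      t * x ^ 2 + (-(1 / (4 * t)) * (s - 2 * t * x) ^ 2) := by
    intro s; field_simp; ring
  simp_rw [h1, Real.exp_add]
  exact (((integrable_exp_neg_mul_sq (by positivity : (0:ℝ) < 1/(4*t))).comp_sub_right
    (2 * t * x))).const_mul _

lemma hs_identity {t : ℝ} (ht : 0 < t) (x : ℝ) :
    ∫ s : ℝ, Real.exp (s * x - s ^ 2 / (4 * t)) =
      Real.exp (t * x ^ 2) * Real.sqrt (4 * π * t) := by
  have h1 : ∀ s : ℝ, s * x - s ^ 2 / (4 * t) =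
      t * x ^ 2 + (-(1 / (4 * t)) * (s - 2 * t * x) ^ 2) := by
    intro s; field_simp; ring
  simp_rw [h1, Real.exp_add]
  rw [integral_const_mul]
  congr 1
  rw [show (fun s : ℝ => Real.exp (-(1/(4*t)) * (s - 2*t*x)^2)) =
    (fun s : ℝ => (fun y : ℝ => Real.exp (-(1/(4*t)) * y^2)) (s - 2*t*x)) from rfl]
  rw [integral_sub_right_eq_self (fun y : ℝ => Real.exp (-(1/(4*t)) * y^2)) (2*t*x),
    integral_gaussian]
  congr 1
  field_simp

/-- Strictly subgaussian right-tail bound: for mean-zero `X` with variance `σ_X²`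
satisfying `E[exp(sX)] ≤ exp(s²σ_X²/2)` for all `s`, for `0 < t < 1/(2σ_X²)`,
`E[exp(t(X² − σ_X²))] ≤ exp(σ_X⁴ t² / (1 − 2σ_X² t))`. -/
theorem stmt6 {Ω : Type*} [MeasurableSpace Ω] (μ : Measure Ω) [IsProbabilityMeasure μ]
    (X : Ω → ℝ) (hX : Measurable X) (σX : ℝ) (hσX : 0 < σX)
    (hmean : ∫ ω, X ω ∂μ = 0)
    (hvar : variance X μ = σX ^ 2)
    (hsub : ∀ s : ℝ, ∫ ω, Real.exp (s * X ω) ∂μ ≤ Real.exp (s ^ 2 * σX ^ 2 / 2)) :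
    ∀ t : ℝ, 0 < t → t < 1 / (2 * σX ^ 2) →
      ∫ ω, Real.exp (t * (X ω ^ 2 - σX ^ 2)) ∂μ ≤
        Real.exp (σX ^ 4 * t ^ 2 / (1 - 2 * σX ^ 2 * t)) := by
  intro t ht0 ht1
  have hσ2 : (0:ℝ) < σX ^ 2 := by positivity
  have hu1 : 2 * σX ^ 2 * t < 1 := by
    rw [lt_div_iff₀ (by positivity)] at ht1; linarith
  have hu0 : 0 < 2 * σX ^ 2 * t := by positivity
  have hvpos : (0:ℝ) < 1 - 2 * σX ^ 2 * t := by linarith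
  by_cases hf : Integrable (fun ω => Real.exp (t * (X ω ^ 2 - σX ^ 2))) μ
  swap
  · rw [integral_undef hf]; positivity
  have heq : (fun ω => Real.exp (t * X ω ^ 2)) =
      fun ω => Real.exp (t * (X ω ^ 2 - σX ^ 2)) * Real.exp (t * σX ^ 2) := by
    funext ω; rw [← Real.exp_add]; ring_nf
  have hg : Integrable (fun ω => Real.exp (t * X ω ^ 2)) μ := by
    rw [heq]; exact hf.mul_const _
  have hb : (0:ℝ) < 1 / (4 * t) - σX ^ 2 / 2 := by
    rw [sub_pos, div_lt_div_iff₀ two_pos (by positivity)]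
    nlinarith
  set a : ℝ := 1 / (4 * t) - σX ^ 2 / 2 with ha
  have h4ta : 4 * t * a = 1 - 2 * σX ^ 2 * t := by
    rw [ha]; field_simp; ring
  -- integrability of exp(s X)
  have hgs : ∀ s : ℝ, Integrable (fun ω => Real.exp (s * X ω)) μ := by
    intro s
    refine (hg.const_mul (Real.exp (s ^ 2 / (4 * t)))).mono'
      ((hX.const_mul s).exp.aestronglyMeasurable) ?_
    filter_upwards with ω
    rw [Real.norm_eq_abs, abs_of_pos (Real.exp_pos _), ← Real.exp_add]
    apply Real.exp_le_exp.mpr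
    have hd : s ^ 2 / (4 * t) * (4 * t) = s ^ 2 := by field_simp
    nlinarith [sq_nonneg (s - 2 * t * X ω)]
  -- key lintegral bound
  have key : ∫⁻ ω, ENNReal.ofReal (Real.exp (t * X ω ^ 2) * Real.sqrt (4 * π * t)) ∂μ
      ≤ ENNReal.ofReal (Real.sqrt (π / a)) := by
    have step1 : ∀ ω : Ω, ENNReal.ofReal (Real.exp (t * X ω ^ 2) * Real.sqrt (4 * π * t))
        = ∫⁻ s : ℝ, ENNReal.ofReal (Real.exp (s * X ω - s ^ 2 / (4 * t))) := by
      intro ω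
      rw [← hs_identity ht0 (X ω),
        ofReal_integral_eq_lintegral_ofReal (hs_integrable ht0 _)
          (Filter.Eventually.of_forall fun s => Real.exp_nonneg _)]
    calc ∫⁻ ω, ENNReal.ofReal (Real.exp (t * X ω ^ 2) * Real.sqrt (4 * π * t)) ∂μ
        = ∫⁻ ω, (∫⁻ s : ℝ, ENNReal.ofReal (Real.exp (s * X ω - s ^ 2 / (4 * t)))) ∂μ := by
          simp_rw [step1]
      _ = ∫⁻ s : ℝ, ∫⁻ ω, ENNReal.ofReal (Real.exp (s * X ω - s ^ 2 / (4 * t))) ∂μ := by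
          refine lintegral_lintegral_swap ?_
          exact (((measurable_snd.mul (hX.comp measurable_fst)).sub
            ((measurable_snd.pow_const 2).div_const _)).exp.ennreal_ofReal).aemeasurable
      _ ≤ ∫⁻ s : ℝ, ENNReal.ofReal (Real.exp (-a * s ^ 2)) := by
          refine lintegral_mono fun s => ?_
          have hsplit : ∀ ω : Ω, Real.exp (s * X ω - s ^ 2 / (4 * t)) =
              Real.exp (s * X ω) * Real.exp (-(s ^ 2 / (4 * t))) := by
            intro ω; rw [← Real.exp_add]; ring_nf
          simp_rw [hsplit, ENNReal.ofReal_mul (Real.exp_nonneg _)]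
          rw [lintegral_mul_const _ ((hX.const_mul s).exp.ennreal_ofReal)]
          have hle : ∫⁻ ω, ENNReal.ofReal (Real.exp (s * X ω)) ∂μ
              ≤ ENNReal.ofReal (Real.exp (s ^ 2 * σX ^ 2 / 2)) := by
            rw [← ofReal_integral_eq_lintegral_ofReal (hgs s)
              (Filter.Eventually.of_forall fun ω => Real.exp_nonneg _)]
            exact ENNReal.ofReal_le_ofReal (hsub s)
          calc (∫⁻ ω, ENNReal.ofReal (Real.exp (s * X ω)) ∂μ) *
                ENNReal.ofReal (Real.exp (-(s ^ 2 / (4 * t))))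
              ≤ ENNReal.ofReal (Real.exp (s ^ 2 * σX ^ 2 / 2)) *
                ENNReal.ofReal (Real.exp (-(s ^ 2 / (4 * t)))) := by
                exact mul_le_mul_left hle _
            _ = ENNReal.ofReal (Real.exp (-a * s ^ 2)) := by
                rw [← ENNReal.ofReal_mul (Real.exp_nonneg _), ← Real.exp_add]
                congr 1
                rw [ha]; field_simp; ring
      _ = ENNReal.ofReal (Real.sqrt (π / a)) := by
          rw [← ofReal_integral_eq_lintegral_ofReal (integrable_exp_neg_mul_sq hb)
            (Filter.Eventually.of_forall fun s => Real.exp_nonneg _), integral_gaussian]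
  -- convert to real bound
  have hI : ∫ ω, Real.exp (t * X ω ^ 2) ∂μ ≤ 1 / Real.sqrt (1 - 2 * σX ^ 2 * t) := by
    rw [← ofReal_integral_eq_lintegral_ofReal (hg.mul_const _)
      (Filter.Eventually.of_forall fun ω => by positivity)] at key
    rw [integral_mul_const] at key
    have h7 : (∫ ω, Real.exp (t * X ω ^ 2) ∂μ) * Real.sqrt (4 * π * t)
        ≤ Real.sqrt (π / a) := by
      exact (ENNReal.ofReal_le_ofReal_iff (Real.sqrt_nonneg _)).mp key
    have hc : (0:ℝ) < Real.sqrt (4 * π * t) := by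
      apply Real.sqrt_pos.mpr; positivity
    rw [← le_div_iff₀ hc] at h7
    refine h7.trans (le_of_eq ?_)
    rw [← Real.sqrt_div (by positivity : (0:ℝ) ≤ π / a),
      show π / a / (4 * π * t) = (1 - 2 * σX ^ 2 * t)⁻¹ by rw [← h4ta]; field_simp,
      Real.sqrt_inv, one_div]
  -- finish
  have heq2 : (fun ω => Real.exp (t * (X ω ^ 2 - σX ^ 2))) =
      fun ω => Real.exp (t * X ω ^ 2) / Real.exp (t * σX ^ 2) := by
    funext ω; rw [← Real.exp_sub]; ring_nf
  rw [heq2, integral_div]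
  set u : ℝ := 2 * σX ^ 2 * t with hu
  have hstep : (∫ ω, Real.exp (t * X ω ^ 2) ∂μ) / Real.exp (t * σX ^ 2)
      ≤ (1 / Real.sqrt (1 - u)) / Real.exp (t * σX ^ 2) := by
    gcongr
  refine hstep.trans ?_
  have htσ : t * σX ^ 2 = u / 2 := by rw [hu]; ring
  rw [htσ, div_le_iff₀ (Real.exp_pos _)]
  calc (1 / Real.sqrt (1 - u))
      ≤ Real.exp (u / 2 + u ^ 2 / (4 * (1 - u))) := aux_log_ineq hu0 hu1
    _ = Real.exp (σX ^ 4 * t ^ 2 / (1 - 2 * σX ^ 2 * t)) * Real.exp (u / 2) := by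
        rw [← Real.exp_add]; congr 1
        rw [hu]; field_simp; ring
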